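/- With q ≥ m and the orthonormal family B^k_q|x⟩ as defined, the tensor power state satisfies |φ_q⟩^{⊗(k+1)} = Σ_{x ∈ {0,1}^m, |x| ≤ k} α^{m−|x|} β^{|x|} B^k_q|x⟩ + μ|ν'⟩, where |ν'⟩ = (1/μ) Σ_{s_1+⋯+s_{k+1}+k+1 ≤ m} α^{s_1+⋯+s_{k+1}} β^{k+1} |s_1,…,s_{k+1}⟩ is a unit vector orthogonal to every B^k_q|x⟩ with |x| ≤ k, and μ ≥ 0 is the corresponding normalization. -/

import Mathlib

open Finset

/-- Hamming weight of a bit string. -/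
def hamWt {m : ℕ} (x : Fin m → Bool) : ℕ :=
  (Finset.univ.filter fun i => x i = true).card

/-- The (sorted) list of positions of the ones of `x`. -/
def onesList {m : ℕ} (x : Fin m → Bool) : List ℕ :=
  ((List.finRange m).filter fun i => x i).map Fin.val

/-- `sRun x i` is the length `s_{i+1}` of the run of zeros preceding the
`(i+1)`-st one of `x` (writing `x = 0^{s_1}1 0^{s_2}1 ⋯ 0^{s_h}1 0^t`). -/
def sRun {m : ℕ} (x : Fin m → Bool) (i : ℕ) : ℕ :=
  (onesList x).getD i 0 - (if i = 0 then 0 else (onesList x).getD (i - 1) 0 + 1)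

/-- The trailing run of zeros, `t = m - s_1 - ⋯ - s_h - h`. -/
def tTrail {m : ℕ} (x : Fin m → Bool) : ℕ :=
  m - ((List.range (hamWt x)).map (sRun x)).sum - hamWt x

/-- Amplitudes of `|φ_q⟩ := Σ_{s=0}^{q-1} β α^s |s⟩ + α^q |q⟩ ∈ ℂ^{q+1}`. -/
noncomputable def phiVec (q : ℕ) (α β : ℝ) : Fin (q + 1) → ℝ :=
  fun s => if (s : ℕ) < q then β * α ^ (s : ℕ) else α ^ q

/-- Amplitudes of the middle register state
`Σ_{j=0}^{q-t-1} α^j β |j+t⟩ + α^{q-t}|q⟩ ∈ ℂ^{q+1}`. -/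
noncomputable def midVec (q t : ℕ) (α β : ℝ) : Fin (q + 1) → ℝ :=
  fun s =>
    if t ≤ (s : ℕ) ∧ (s : ℕ) < q then β * α ^ ((s : ℕ) - t)
    else if (s : ℕ) = q then α ^ (q - t) else 0

/-- The encoded vector
`B^k_q|x⟩ = |s_1,…,s_h⟩ ⊗ (Σ_{j=0}^{q-t-1} α^j β |j+t⟩ + α^{q-t}|q⟩) ⊗ |φ_q⟩^{⊗(k−h)}`
in `(ℂ^{q+1})^{⊗(k+1)}`, where `h = hamWt x`. -/
noncomputable def Bvec (q m k : ℕ) (α β : ℝ) (x : Fin m → Bool) :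
    EuclideanSpace ℝ (Fin (k + 1) → Fin (q + 1)) :=
  WithLp.toLp 2 fun s' => ∏ i : Fin (k + 1),
    (if (i : ℕ) < hamWt x then (if ((s' i : ℕ)) = sRun x (i : ℕ) then 1 else 0)
     else if (i : ℕ) = hamWt x then midVec q (tTrail x) α β (s' i)
     else phiVec q α β (s' i))


/-- The tensor power `|φ_q⟩^{⊗(k+1)}`. -/
noncomputable def phiPow (q k : ℕ) (α β : ℝ) :
    EuclideanSpace ℝ (Fin (k + 1) → Fin (q + 1)) :=
  WithLp.toLp 2 fun s' => ∏ i : Fin (k + 1), phiVec q α β (s' i)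

/-- The residual (unnormalized) vector `μ|ν'⟩ =
`Σ_{s_1+⋯+s_{k+1}+k+1 ≤ m} α^{s_1+⋯+s_{k+1}} β^{k+1} |s_1,…,s_{k+1}⟩`. -/
noncomputable def nuVec (q m k : ℕ) (α β : ℝ) :
    EuclideanSpace ℝ (Fin (k + 1) → Fin (q + 1)) :=
  WithLp.toLp 2 fun s' =>
    if (∑ i : Fin (k + 1), ((s' i : ℕ))) + k + 1 ≤ m then
      α ^ (∑ i : Fin (k + 1), ((s' i : ℕ))) * β ^ (k + 1)
    else 0

/-- position of the `i`-th one given run lengths `r`. -/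
def posOf (r : ℕ → ℕ) (i : ℕ) : ℕ := (∑ j ∈ range i, (r j + 1)) + r i

def Lof (r : ℕ → ℕ) (h : ℕ) : List ℕ := (List.range h).map (posOf r)

lemma length_onesList {m : ℕ} (x : Fin m → Bool) : (onesList x).length = hamWt x := by
  unfold onesList hamWt
  rw [Fin.univ_def]
  simp [Finset.filter, Finset.card, Multiset.filter_coe, List.filter_congr]

lemma sorted_onesList {m : ℕ} (x : Fin m → Bool) : (onesList x).Pairwise (· < ·) := by
  unfold onesList
  apply List.Pairwise.map
  · exact fun a b hab => hab
  · exact List.Pairwise.filter _ (List.pairwise_lt_finRange m)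

lemma mem_onesList {m : ℕ} (x : Fin m → Bool) (j : Fin m) :
    (j : ℕ) ∈ onesList x ↔ x j = true := by
  unfold onesList
  simp only [List.mem_map, List.mem_filter, List.mem_finRange, true_and]
  constructor
  · rintro ⟨a, ha, hav⟩
    obtain rfl : a = j := Fin.val_injective hav
    simpa using ha
  · intro hj; exact ⟨j, by simpa using hj, rfl⟩

lemma lt_of_mem_onesList {m : ℕ} (x : Fin m → Bool) {j : ℕ} (hj : j ∈ onesList x) : j < m := by
  unfold onesList at hj
  simp only [List.mem_map, List.mem_filter] at hj
  obtain ⟨a, _, rfl⟩ := hj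
  exact a.isLt

lemma posOf_succ (r : ℕ → ℕ) (i : ℕ) : posOf r (i + 1) = posOf r i + 1 + r (i + 1) := by
  unfold posOf
  rw [Finset.sum_range_succ]
  ring

lemma posOf_strictMono (r : ℕ → ℕ) : StrictMono (posOf r) := by
  apply strictMono_nat_of_lt_succ
  intro n
  rw [posOf_succ]
  omega

lemma sum_range_eq_posOf (r : ℕ → ℕ) (h : ℕ) :
    (∑ j ∈ range (h + 1), (r j + 1)) = posOf r h + 1 := by
  rw [Finset.sum_range_succ]
  unfold posOf
  ring

/-- run lengths of a list (same formula as `sRun`). -/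
def runsOf (L : List ℕ) (i : ℕ) : ℕ :=
  L.getD i 0 - (if i = 0 then 0 else L.getD (i - 1) 0 + 1)

lemma getD_eq_posOf {L : List ℕ} (hL : L.Pairwise (· < ·)) :
    ∀ i < L.length, L.getD i 0 = posOf (runsOf L) i := by
  intro i
  induction i with
  | zero =>
    intro h0
    unfold posOf runsOf
    simp
  | succ n ih =>
    intro hn
    have hlt : L.getD n 0 < L.getD (n + 1) 0 := by
      rw [List.getD_eq_getElem L 0 (by omega), List.getD_eq_getElem L 0 hn]
      exact List.Pairwise.rel_get_of_lt hL
        (show (⟨n, by omega⟩ : Fin _) < ⟨n + 1, hn⟩ from by simp [Fin.mk_lt_mk])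
    rw [posOf_succ, ← ih (by omega)]
    unfold runsOf
    simp only [Nat.succ_ne_zero, if_false, Nat.add_sub_cancel]
    omega

lemma eq_Lof {L : List ℕ} (hL : L.Pairwise (· < ·)) : L = Lof (runsOf L) L.length := by
  apply List.ext_getElem
  · simp [Lof]
  · intro i h1 h2
    have : (Lof (runsOf L) L.length)[i] = posOf (runsOf L) i := by
      simp [Lof]
    rw [this, ← getD_eq_posOf hL i h1, List.getD_eq_getElem L 0 h1]

lemma Lof_sorted (r : ℕ → ℕ) (h : ℕ) : (Lof r h).Pairwise (· < ·) := by
  unfold Lof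
  apply List.Pairwise.map
  · exact fun a b hab => hab
  · exact (List.pairwise_lt_range (n := h)).imp (fun hab => posOf_strictMono r hab)

lemma mem_Lof {r : ℕ → ℕ} {h j : ℕ} : j ∈ Lof r h ↔ ∃ i < h, posOf r i = j := by
  simp [Lof]

lemma getD_Lof (r : ℕ → ℕ) {h i : ℕ} (hi : i < h) : (Lof r h).getD i 0 = posOf r i := by
  rw [List.getD_eq_getElem _ 0 (by simp [Lof]; omega)]
  simp [Lof]

lemma runsOf_Lof (r : ℕ → ℕ) {h i : ℕ} (hi : i < h) : runsOf (Lof r h) i = r i := by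
  unfold runsOf
  rcases Nat.eq_zero_or_pos i with rfl | hpos
  · rw [if_pos rfl, getD_Lof r hi]
    simp [posOf]
  · rw [if_neg (by omega), getD_Lof r hi, getD_Lof r (by omega : i - 1 < h)]
    have hkey : posOf r i = posOf r (i - 1) + 1 + r i := by
      conv_lhs => rw [show i = i - 1 + 1 by omega, posOf_succ]
      rw [show i - 1 + 1 = i by omega]
    omega

lemma sorted_ext {L₁ L₂ : List ℕ} (h₁ : L₁.Pairwise (· < ·)) (h₂ : L₂.Pairwise (· < ·))
    (hmem : ∀ j, j ∈ L₁ ↔ j ∈ L₂) : L₁ = L₂ :=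
  List.Pairwise.eq_of_mem_iff h₁ h₂ hmem

lemma sRun_eq_runsOf {m : ℕ} (x : Fin m → Bool) : sRun x = runsOf (onesList x) := rfl

lemma onesList_eq_Lof {m : ℕ} (x : Fin m → Bool) :
    onesList x = Lof (sRun x) (hamWt x) := by
  rw [sRun_eq_runsOf, ← length_onesList]
  exact eq_Lof (sorted_onesList x)

lemma posOf_lt_c {r : ℕ → ℕ} {i h : ℕ} (hi : i < h) :
    posOf r i < ∑ j ∈ range h, (r j + 1) := by
  have h1 : posOf r i + 1 = ∑ j ∈ range (i + 1), (r j + 1) := (sum_range_eq_posOf r i).symm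
  have h2 : (∑ j ∈ range (i + 1), (r j + 1)) ≤ ∑ j ∈ range h, (r j + 1) :=
    Finset.sum_le_sum_of_subset (Finset.range_subset_range.2 (by omega))
  omega

lemma sum_sRun_bound {m : ℕ} (x : Fin m → Bool) :
    (∑ i ∈ range (hamWt x), (sRun x i + 1)) ≤ m := by
  rcases Nat.eq_zero_or_pos (hamWt x) with h0 | hpos
  · simp [h0]
  · have hlen : (onesList x).length = hamWt x := length_onesList x
    have hmem : (onesList x).getD (hamWt x - 1) 0 ∈ onesList x := by
      rw [List.getD_eq_getElem _ 0 (by omega)]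
      exact List.getElem_mem _
    have hlt := lt_of_mem_onesList x hmem
    have := getD_eq_posOf (sorted_onesList x) (hamWt x - 1) (by omega)
    rw [show hamWt x = (hamWt x - 1) + 1 by omega, sum_range_eq_posOf]
    rw [← sRun_eq_runsOf] at this
    omega

def xOf (m : ℕ) (r : ℕ → ℕ) (h : ℕ) : Fin m → Bool := fun j => decide ((j : ℕ) ∈ Lof r h)

lemma onesList_xOf {m : ℕ} {r : ℕ → ℕ} {h : ℕ} (hc : (∑ j ∈ range h, (r j + 1)) ≤ m) :
    onesList (xOf m r h) = Lof r h := by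
  apply sorted_ext (sorted_onesList _) (Lof_sorted r h)
  intro j
  constructor
  · intro hj
    have hjm := lt_of_mem_onesList _ hj
    have := (mem_onesList (xOf m r h) ⟨j, hjm⟩).1 hj
    simpa [xOf] using this
  · intro hj
    have hjm : j < m := by
      obtain ⟨i, hi, rfl⟩ := mem_Lof.1 hj
      exact lt_of_lt_of_le (posOf_lt_c hi) hc
    exact (mem_onesList (xOf m r h) ⟨j, hjm⟩).2 (by simpa [xOf] using hj)

lemma hamWt_xOf {m : ℕ} {r : ℕ → ℕ} {h : ℕ} (hc : (∑ j ∈ range h, (r j + 1)) ≤ m) :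
    hamWt (xOf m r h) = h := by
  rw [← length_onesList, onesList_xOf hc]
  simp [Lof]

lemma sRun_xOf {m : ℕ} {r : ℕ → ℕ} {h i : ℕ} (hc : (∑ j ∈ range h, (r j + 1)) ≤ m)
    (hi : i < h) : sRun (xOf m r h) i = r i := by
  rw [sRun_eq_runsOf, onesList_xOf hc]
  exact runsOf_Lof r hi

lemma posOf_congr {r r' : ℕ → ℕ} {i : ℕ} (hrr : ∀ j ≤ i, r j = r' j) :
    posOf r i = posOf r' i := by
  unfold posOf
  rw [hrr i le_rfl]
  congr 1
  exact Finset.sum_congr rfl fun j hj => by rw [hrr j (by simp at hj; omega)]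

lemma eq_xOf {m h : ℕ} {r : ℕ → ℕ} {x : Fin m → Bool} (hh : hamWt x = h)
    (hr : ∀ i < h, sRun x i = r i) : x = xOf m r h := by
  have hL : onesList x = Lof r h := by
    rw [onesList_eq_Lof x, hh]
    unfold Lof
    exact List.map_congr_left fun i hi => posOf_congr fun j hj =>
      hr j (lt_of_le_of_lt hj (List.mem_range.1 hi))
  funext j
  have h1 : x j = true ↔ (j : ℕ) ∈ Lof r h := by rw [← hL]; exact (mem_onesList x j).symm
  have h2 : xOf m r h j = true ↔ (j : ℕ) ∈ Lof r h := by simp [xOf]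
  rw [Bool.eq_iff_iff, h1, h2]

/-- run-length data read off from `s'`. -/
def bOf {q k : ℕ} (s' : Fin (k + 1) → Fin (q + 1)) : ℕ → ℕ :=
  fun i => if hi : i < k + 1 then (s' ⟨i, hi⟩ : ℕ) else 0

lemma bOf_val {q k : ℕ} (s' : Fin (k + 1) → Fin (q + 1)) (i : Fin (k + 1)) :
    bOf s' (i : ℕ) = (s' i : ℕ) := by
  simp [bOf, i.isLt]

noncomputable def Pp (q k : ℕ) (α β : ℝ) (s' : Fin (k + 1) → Fin (q + 1)) (h : ℕ) : ℝ :=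
  ∏ i ∈ Finset.univ.filter (fun i : Fin (k + 1) => h ≤ (i : ℕ)), phiVec q α β (s' i)

noncomputable def Qq (q m k : ℕ) (α β : ℝ) (s' : Fin (k + 1) → Fin (q + 1)) (h : ℕ) : ℝ :=
  if (∑ j ∈ range h, (bOf s' j + 1)) ≤ m then
    α ^ (∑ j ∈ range h, bOf s' j) * β ^ h * Pp q k α β s' h
  else 0

lemma list_sum_map_range (f : ℕ → ℕ) (n : ℕ) :
    ((List.range n).map f).sum = ∑ j ∈ range n, f j := by
  induction n with
  | zero => simp
  | succ n ih => simp [List.range_succ, Finset.sum_range_succ, ih]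

lemma tTrail_eq {m : ℕ} (x : Fin m → Bool) :
    tTrail x = m - (∑ j ∈ range (hamWt x), sRun x j) - hamWt x := by
  unfold tTrail
  rw [list_sum_map_range]

lemma Pp_zero (q k : ℕ) (α β : ℝ) (s' : Fin (k + 1) → Fin (q + 1)) :
    Pp q k α β s' 0 = phiPow q k α β s' := by
  unfold Pp phiPow
  rw [Finset.filter_true_of_mem (fun i _ => Nat.zero_le _)]

lemma Pp_top (q k : ℕ) (α β : ℝ) (s' : Fin (k + 1) → Fin (q + 1)) :
    Pp q k α β s' (k + 1) = 1 := by
  unfold Pp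
  rw [Finset.filter_false_of_mem, Finset.prod_empty]
  intro i _
  exact not_le.2 i.isLt

lemma Pp_succ (q k : ℕ) (α β : ℝ) (s' : Fin (k + 1) → Fin (q + 1)) {h : ℕ} (hh : h < k + 1) :
    Pp q k α β s' h = phiVec q α β (s' ⟨h, hh⟩) * Pp q k α β s' (h + 1) := by
  unfold Pp
  have hsplit : Finset.univ.filter (fun i : Fin (k + 1) => h ≤ (i : ℕ))
      = insert ⟨h, hh⟩ (Finset.univ.filter (fun i : Fin (k + 1) => h + 1 ≤ (i : ℕ))) := by
    ext i
    simp [Fin.ext_iff]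
    omega
  rw [hsplit, Finset.prod_insert (by simp)]

lemma sum_ite_range {M : Type*} [AddCommMonoid M] (f : ℕ → M) {h n : ℕ} (hh : h ≤ n) :
    (∑ j ∈ range n, if j < h then f j else 0) = ∑ j ∈ range h, f j := by
  rw [← Finset.sum_subset (Finset.range_subset_range.2 hh)
      (by intro j _ hj; rw [if_neg (by simp at hj; omega)])]
  exact Finset.sum_congr rfl fun j hj => if_pos (by simpa using hj)

lemma sum_filter_lt_fin {k : ℕ} (f : ℕ → ℕ) {h : ℕ} (hh : h ≤ k + 1) :
    (∑ i ∈ Finset.univ.filter (fun i : Fin (k + 1) => (i : ℕ) < h), f (i : ℕ))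
      = ∑ j ∈ range h, f j := by
  rw [Finset.sum_filter, Fin.sum_univ_eq_sum_range (fun j => if j < h then f j else 0)]
  exact sum_ite_range f hh

lemma Qq_zero (q m k : ℕ) (α β : ℝ) (s' : Fin (k + 1) → Fin (q + 1)) :
    Qq q m k α β s' 0 = phiPow q k α β s' := by
  unfold Qq
  rw [if_pos (by simp), Pp_zero]
  simp

lemma Qq_top (q m k : ℕ) (α β : ℝ) (s' : Fin (k + 1) → Fin (q + 1)) :
    Qq q m k α β s' (k + 1) = nuVec q m k α β s' := by
  unfold Qq nuVec
  simp only [WithLp.ofLp_toLp]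
  have hb : (∑ j ∈ range (k + 1), bOf s' j) = ∑ i : Fin (k + 1), ((s' i : ℕ)) := by
    rw [← Fin.sum_univ_eq_sum_range (fun j => bOf s' j) (k + 1)]
    exact Finset.sum_congr rfl fun i _ => bOf_val s' i
  have hc : (∑ j ∈ range (k + 1), (bOf s' j + 1)) = (∑ i : Fin (k + 1), ((s' i : ℕ))) + k + 1 := by
    rw [Finset.sum_add_distrib, hb]
    simp [add_assoc]
  rw [hc, Pp_top, hb]
  split <;> ring

lemma Bvec_xOf (q m k : ℕ) (α β : ℝ) (s' : Fin (k + 1) → Fin (q + 1)) {h : ℕ} (hh : h < k + 1)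
    (hc : (∑ j ∈ range h, (bOf s' j + 1)) ≤ m) :
    Bvec q m k α β (xOf m (bOf s') h) s'
      = midVec q (m - (∑ j ∈ range h, bOf s' j) - h) α β (s' ⟨h, hh⟩)
          * Pp q k α β s' (h + 1) := by
  have hham : hamWt (xOf m (bOf s') h) = h := hamWt_xOf hc
  have ht : tTrail (xOf m (bOf s') h) = m - (∑ j ∈ range h, bOf s' j) - h := by
    rw [tTrail_eq, hham]
    have : (∑ j ∈ range h, sRun (xOf m (bOf s') h) j) = ∑ j ∈ range h, bOf s' j :=
      Finset.sum_congr rfl fun j hj => sRun_xOf hc (by simpa using hj)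
    rw [this]
  unfold Bvec
  simp only [hham, ht, WithLp.ofLp_toLp]
  rw [← Finset.prod_subset
      (Finset.subset_univ (Finset.univ.filter (fun i : Fin (k + 1) => h ≤ (i : ℕ))))
      (by
        intro i _ hi
        simp only [Finset.mem_filter, Finset.mem_univ, true_and, not_le] at hi
        rw [if_pos hi, if_pos]
        rw [sRun_xOf hc hi, bOf_val])]
  have hsplit : Finset.univ.filter (fun i : Fin (k + 1) => h ≤ (i : ℕ))
      = insert ⟨h, hh⟩ (Finset.univ.filter (fun i : Fin (k + 1) => h + 1 ≤ (i : ℕ))) := by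
    ext i
    simp [Fin.ext_iff]
    omega
  rw [hsplit, Finset.prod_insert (by simp)]
  congr 1
  · simp
  · refine Finset.prod_congr rfl fun i hi => ?_
    simp only [Finset.mem_filter, Finset.mem_univ, true_and] at hi
    rw [if_neg (by omega), if_neg (by omega)]

lemma Qq_step (q m k : ℕ) (hq : m ≤ q) (α β : ℝ) (s' : Fin (k + 1) → Fin (q + 1))
    {h : ℕ} (hh : h < k + 1) :
    (if (∑ j ∈ range h, (bOf s' j + 1)) ≤ m then
        α ^ (m - h) * β ^ h * Bvec q m k α β (xOf m (bOf s') h) s' else 0)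
      = Qq q m k α β s' h - Qq q m k α β s' (h + 1) := by
  have hcsum : (∑ j ∈ range h, (bOf s' j + 1)) = (∑ j ∈ range h, bOf s' j) + h := by
    rw [Finset.sum_add_distrib]
    simp
  have hbh : bOf s' h = ((s' ⟨h, hh⟩ : Fin (q + 1)) : ℕ) := by simp [bOf, hh]
  have hsq : ((s' ⟨h, hh⟩ : Fin (q + 1)) : ℕ) ≤ q := Nat.lt_succ_iff.1 (s' ⟨h, hh⟩).isLt
  have hsucc : (∑ j ∈ range (h + 1), (bOf s' j + 1))
      = (∑ j ∈ range h, bOf s' j) + h + (bOf s' h + 1) := by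
    rw [Finset.sum_range_succ, hcsum]
  have hsuccb : (∑ j ∈ range (h + 1), bOf s' j)
      = (∑ j ∈ range h, bOf s' j) + bOf s' h := Finset.sum_range_succ _ _
  set sb := ∑ j ∈ range h, bOf s' j with hsb
  set s := ((s' ⟨h, hh⟩ : Fin (q + 1)) : ℕ) with hs
  by_cases hcm : (∑ j ∈ range h, (bOf s' j + 1)) ≤ m
  · rw [if_pos hcm, Bvec_xOf q m k α β s' hh hcm]
    rw [hcsum] at hcm
    by_cases hA : m ≤ sb + h + s
    · have hQ1 : Qq q m k α β s' (h + 1) = 0 := by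
        unfold Qq
        rw [if_neg (by omega)]
      rw [hQ1, sub_zero]
      unfold Qq
      rw [if_pos (by omega), Pp_succ q k α β s' hh]
      simp only [midVec, phiVec, ← hs]
      rcases Nat.lt_or_ge s q with hsq' | hsq'
      · rw [if_pos ⟨by omega, hsq'⟩, if_pos hsq']
        have hexp : α ^ (m - h) * α ^ (s - (m - sb - h)) = α ^ sb * α ^ s := by
          rw [← pow_add, ← pow_add]
          congr 1
          omega
        linear_combination (β ^ h * β * Pp q k α β s' (h + 1)) * hexp
      · have hseq : s = q := by omega
        rw [if_neg (by omega), if_pos hseq, if_neg (by omega)]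
        have hexp : α ^ (m - h) * α ^ (q - (m - sb - h)) = α ^ sb * α ^ q := by
          rw [← pow_add, ← pow_add]
          congr 1
          omega
        linear_combination (β ^ h * Pp q k α β s' (h + 1)) * hexp
    · have hsq' : s < q := by omega
      simp only [midVec, ← hs]
      rw [if_neg (by omega), if_neg (by omega)]
      unfold Qq
      rw [if_pos (by omega), if_pos (by omega), hsuccb, Pp_succ q k α β s' hh]
      simp only [phiVec, hbh, ← hs]
      rw [if_pos hsq', pow_add, pow_succ]
      ring
  · rw [if_neg hcm]
    unfold Qq
    rw [if_neg hcm, if_neg (by rw [hcsum] at hcm; omega)]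
    simp

lemma scalar_main (q m k : ℕ) (hq : m ≤ q) (α β : ℝ) (hα : 0 < α) (hβ : 0 < β)
    (s' : Fin (k + 1) → Fin (q + 1)) :
    phiPow q k α β s'
      = (∑ x ∈ Finset.univ.filter fun x : Fin m → Bool => hamWt x ≤ k,
          (α ^ (m - hamWt x) * β ^ (hamWt x)) * Bvec q m k α β x s')
        + nuVec q m k α β s' := by
  classical
  set f : (Fin m → Bool) → ℝ :=
    fun x => (α ^ (m - hamWt x) * β ^ (hamWt x)) * Bvec q m k α β x s' with hf
  -- Step 1: restrict to strings whose runs match s'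
  have h1 : (∑ x ∈ (Finset.univ.filter fun x : Fin m → Bool => hamWt x ≤ k).filter
        (fun x => ∀ i < hamWt x, sRun x i = bOf s' i), f x)
      = ∑ x ∈ Finset.univ.filter fun x : Fin m → Bool => hamWt x ≤ k, f x := by
    apply Finset.sum_filter_of_ne
    intro x hx hfx
    simp only [Finset.mem_filter, Finset.mem_univ, true_and] at hx
    intro i hi
    by_contra hne
    apply hfx
    have hik : i < k + 1 := by omega
    have : Bvec q m k α β x s' = 0 := by
      unfold Bvec
      simp only [WithLp.ofLp_toLp]
      apply Finset.prod_eq_zero (Finset.mem_univ (⟨i, hik⟩ : Fin (k + 1)))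
      rw [if_pos (by simpa using hi), if_neg]
      have := bOf_val s' ⟨i, hik⟩
      simp only [Fin.val_mk] at this ⊢
      omega
    rw [hf]
    simp [this]
  rw [← h1]
  -- Step 2: bijection with run data
  have h2 : (∑ x ∈ (Finset.univ.filter fun x : Fin m → Bool => hamWt x ≤ k).filter
        (fun x => ∀ i < hamWt x, sRun x i = bOf s' i), f x)
      = ∑ h ∈ (range (k + 1)).filter
          (fun h => (∑ j ∈ range h, (bOf s' j + 1)) ≤ m),
          α ^ (m - h) * β ^ h * Bvec q m k α β (xOf m (bOf s') h) s' := by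
    apply Finset.sum_nbij' (fun x => hamWt x) (fun h => xOf m (bOf s') h)
    · intro x hx
      simp only [Finset.mem_filter, Finset.mem_univ, Finset.mem_range, true_and] at hx ⊢
      obtain ⟨hxk, hxr⟩ := hx
      have : (∑ j ∈ range (hamWt x), (bOf s' j + 1))
          = ∑ j ∈ range (hamWt x), (sRun x j + 1) :=
        Finset.sum_congr rfl fun j hj => by rw [hxr j (by simpa using hj)]
      have h4 := sum_sRun_bound x
      exact ⟨by omega, by omega⟩
    · intro h hh
      simp only [Finset.mem_filter, Finset.mem_univ, Finset.mem_range, true_and] at hh ⊢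
      obtain ⟨hhk, hc⟩ := hh
      refine ⟨by rw [hamWt_xOf hc]; omega, ?_⟩
      intro i hi
      rw [hamWt_xOf hc] at hi
      exact sRun_xOf hc hi
    · intro x hx
      simp only [Finset.mem_filter, Finset.mem_univ, true_and] at hx
      exact (eq_xOf rfl fun i hi => hx.2 i hi).symm
    · intro h hh
      simp only [Finset.mem_filter, Finset.mem_univ, Finset.mem_range, true_and] at hh
      exact hamWt_xOf hh.2
    · intro x hx
      simp only [Finset.mem_filter, Finset.mem_univ, true_and] at hx
      rw [hf]
      simp only []
      rw [← eq_xOf rfl fun i hi => hx.2 i hi]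
  rw [h2, Finset.sum_filter]
  have h3 : (∑ h ∈ range (k + 1),
        if (∑ j ∈ range h, (bOf s' j + 1)) ≤ m then
          α ^ (m - h) * β ^ h * Bvec q m k α β (xOf m (bOf s') h) s' else 0)
      = ∑ h ∈ range (k + 1), (Qq q m k α β s' h - Qq q m k α β s' (h + 1)) :=
    Finset.sum_congr rfl fun h hh => Qq_step q m k hq α β s' (by simpa using hh)
  rw [h3, Finset.sum_range_sub', Qq_zero, Qq_top]
  ring

lemma ortho_term (q m k : ℕ) (hq : m ≤ q) (α β : ℝ) (x : Fin m → Bool) (hx : hamWt x ≤ k)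
    (s' : Fin (k + 1) → Fin (q + 1)) :
    Bvec q m k α β x s' * nuVec q m k α β s' = 0 := by
  by_cases hnu : (∑ i : Fin (k + 1), ((s' i : ℕ))) + k + 1 ≤ m
  · have hzero : Bvec q m k α β x s' = 0 := by
      by_cases hrun : ∀ i : Fin (k + 1), (i : ℕ) < hamWt x → ((s' i : ℕ)) = sRun x (i : ℕ)
      · have hbound := sum_sRun_bound x
        have hbound' : (∑ j ∈ range (hamWt x), (sRun x j + 1))
            = (∑ j ∈ range (hamWt x), sRun x j) + hamWt x := by
          rw [Finset.sum_add_distrib]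
          simp
        have hhk : hamWt x < k + 1 := by omega
        have ht := tTrail_eq x
        have hsum_ineq : (∑ j ∈ range (hamWt x), sRun x j)
            + ((s' ⟨hamWt x, hhk⟩ : Fin (q + 1)) : ℕ) ≤ ∑ i : Fin (k + 1), ((s' i : ℕ)) := by
          have hsub : insert (⟨hamWt x, hhk⟩ : Fin (k + 1))
              (Finset.univ.filter (fun i : Fin (k + 1) => (i : ℕ) < hamWt x))
              ⊆ Finset.univ := Finset.subset_univ _
          have hle : (∑ i ∈ insert (⟨hamWt x, hhk⟩ : Fin (k + 1))
              (Finset.univ.filter (fun i : Fin (k + 1) => (i : ℕ) < hamWt x)), ((s' i : ℕ)))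
              ≤ ∑ i : Fin (k + 1), ((s' i : ℕ)) := Finset.sum_le_sum_of_subset hsub
          rw [Finset.sum_insert (by simp)] at hle
          have heq : (∑ i ∈ Finset.univ.filter (fun i : Fin (k + 1) => (i : ℕ) < hamWt x),
              ((s' i : ℕ))) = ∑ j ∈ range (hamWt x), sRun x j := by
            rw [show (∑ i ∈ Finset.univ.filter (fun i : Fin (k + 1) => (i : ℕ) < hamWt x),
                ((s' i : ℕ))) = ∑ i ∈ Finset.univ.filter
                  (fun i : Fin (k + 1) => (i : ℕ) < hamWt x), sRun x (i : ℕ) from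
              Finset.sum_congr rfl fun i hi => hrun i (by simpa using hi)]
            exact sum_filter_lt_fin (sRun x) (by omega)
          omega
        have hslt : ((s' ⟨hamWt x, hhk⟩ : Fin (q + 1)) : ℕ) < tTrail x := by omega
        unfold Bvec
        simp only [WithLp.ofLp_toLp]
        apply Finset.prod_eq_zero (Finset.mem_univ (⟨hamWt x, hhk⟩ : Fin (k + 1)))
        rw [if_neg (by simp), if_pos rfl]
        unfold midVec
        rw [if_neg (by omega), if_neg (by omega)]
      · push_neg at hrun
        obtain ⟨i, hi, hne⟩ := hrun
        unfold Bvec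
        simp only [WithLp.ofLp_toLp]
        apply Finset.prod_eq_zero (Finset.mem_univ i)
        rw [if_pos hi, if_neg hne]
    rw [hzero, zero_mul]
  · have : nuVec q m k α β s' = 0 := by
      unfold nuVec
      simp only [WithLp.ofLp_toLp]
      rw [if_neg hnu]
    rw [this, mul_zero]

/-- For `q ≥ m` and `α, β > 0` with `α² + β² = 1`:
`|φ_q⟩^{⊗(k+1)} = Σ_{x ∈ {0,1}^m, |x| ≤ k} α^{m−|x|} β^{|x|} B^k_q|x⟩ + μ|ν'⟩`,
where `μ|ν'⟩ = nuVec` (so `μ = ‖nuVec‖ ≥ 0` is the normalization and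
`|ν'⟩ = nuVec/μ` is a unit vector), and `μ|ν'⟩` is orthogonal to every
`B^k_q|x⟩` with `|x| ≤ k`. -/
theorem phiPow_decomposition (q m k : ℕ) (hq : m ≤ q) (α β : ℝ)
    (hα : 0 < α) (hβ : 0 < β) (hαβ : α ^ 2 + β ^ 2 = 1) :
    phiPow q k α β
        = (∑ x ∈ Finset.univ.filter fun x : Fin m → Bool => hamWt x ≤ k,
            (α ^ (m - hamWt x) * β ^ (hamWt x)) • Bvec q m k α β x)
          + nuVec q m k α β
      ∧ (∀ x : Fin m → Bool, hamWt x ≤ k →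
          (inner ℝ (Bvec q m k α β x) (nuVec q m k α β) : ℝ) = 0) := by
  constructor
  · ext s'
    have hsum : ((∑ x ∈ Finset.univ.filter fun x : Fin m → Bool => hamWt x ≤ k,
        (α ^ (m - hamWt x) * β ^ (hamWt x)) • Bvec q m k α β x)) s'
        = ∑ x ∈ Finset.univ.filter fun x : Fin m → Bool => hamWt x ≤ k,
            (α ^ (m - hamWt x) * β ^ (hamWt x)) * Bvec q m k α β x s' := by
      induction (Finset.univ.filter fun x : Fin m → Bool => hamWt x ≤ k)
          using Finset.cons_induction with
      | empty => rfl
      | cons a s ha ih => rw [Finset.sum_cons, Finset.sum_cons, ← ih]; rfl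
    show phiPow q k α β s' = _
    rw [PiLp.add_apply, hsum]
    exact scalar_main q m k hq α β hα hβ s'
  · intro x hx
    rw [PiLp.inner_apply]
    apply Finset.sum_eq_zero
    intro s' _
    simpa [RCLike.inner_apply, mul_comm] using ortho_term q m k hq α β x hx s'
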